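/- Let G be a discrete group all of whose subgroups are totally minimal (as discrete groups, i.e., every Hausdorff group topology on any quotient of any subgroup making the quotient map continuous is discrete) and which is maximally almost periodic. Then G is finite. -/

import Mathlib

universe u v

theorem finite_of_totallyMinimal_MAP {G : Type u} [Group G]
    -- every subgroup of `G` is totally minimal as a discrete group: every surjective
    -- homomorphism from it onto a Hausdorff topological group is an open map of the
    -- discrete topology
    (htm : ∀ (S : Subgroup G) (H : Type u) [Group H] [TopologicalSpace H]
      [IsTopologicalGroup H] [T2Space H] (f : S →* H), Function.Surjective f →
      @IsOpenMap S H ⊥ _ f)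
    -- `G` is maximally almost periodic: it admits an injective homomorphism into a
    -- compact Hausdorff topological group
    (hmap : ∃ (K : Type u) (_ : Group K) (_ : TopologicalSpace K)
      (_ : IsTopologicalGroup K) (_ : CompactSpace K) (_ : T2Space K)
      (m : G →* K), Function.Injective m) :
    Finite G := by
  obtain ⟨K, _, _, _, _, _, m, hm⟩ := hmap
  let R : Subgroup K := m.range
  let f : (⊤ : Subgroup G) →* R := m.rangeRestrict.comp (Subgroup.subtype ⊤)
  have hfs : Function.Surjective f := by
    exact (m.rangeRestrict_surjective).comp (fun x => ⟨⟨x, trivial⟩, rfl⟩)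
  have hopen := htm ⊤ R f hfs
  have h1 : IsOpen ({1} : Set R) := by
    letI : TopologicalSpace (⊤ : Subgroup G) := ⊥
    haveI : DiscreteTopology (⊤ : Subgroup G) := ⟨rfl⟩
    have := hopen {1} (isOpen_discrete _)
    simpa using this
  have : DiscreteTopology R := by
    rw [discreteTopology_iff_isOpen_singleton_one]
    exact h1
  have hclosed : IsClosed (R : Set K) := Subgroup.isClosed_of_discrete
  have : CompactSpace R := isCompact_iff_compactSpace.mp (hclosed.isCompact)
  have : Finite R := finite_of_compact_of_discrete
  exact Finite.of_injective _ (MonoidHom.rangeRestrict_injective_iff.mpr hm)
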